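/- Let G=(V,E) be a finite graph without loops, let λ ≥ 0, and set p' = (1 − e^{−2λ})/2. Then for all distinct x,y ∈ V, the Ising two-point function with λ_e = λ for all edges satisfies σ(x,y) = φ_{p'}(∂ζ = {x,y}) / φ_{p'}(∂ζ = ∅), where ζ ∈ {0,1}^E is distributed according to the product measure φ_{p'} with density p', and ∂ζ = {v ∈ V : Σ_{e incident to v} ζ(e) is odd}. -/

import Mathlib

open scoped BigOperators symmDiff Classical

noncomputable section FlowsAndFerromagnets

/-- The number of non-zero mod-`q` flows on the (multi)graph with vertex type `V`,
edge-index type `ι`, and a fixed orientation in which edge `i` leaves `s i` and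
arrives at `t i`.  A mod-`q` flow assigns a value of `ZMod q` to every oriented edge
so that, at every vertex, the total flow leaving equals the total flow arriving
(mod `q`); it is non-zero if no edge carries the value `0`. -/
def flowCount (V : Type) [Fintype V] [DecidableEq V] {ι : Type} [Fintype ι]
    (s t : ι → V) (q : ℕ) : ℕ :=
  Nat.card {f : ι → ZMod q //
    (∀ i, f i ≠ 0) ∧
    ∀ v : V, (∑ i, if s i = v then f i else 0) = (∑ i, if t i = v then f i else 0)}

/-- `C(G_m; q)`: the number of non-zero mod-`q` flows on the multigraph `G_m`
obtained from `G` (edges indexed by `E`, with endpoints `s e`, `t e`) by replacing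
each edge `e` by `m e` parallel copies. -/
def flowCountM {V E : Type} [Fintype V] [DecidableEq V] [Fintype E]
    (s t : E → V) (m : E → ℕ) (q : ℕ) : ℕ :=
  flowCount V (fun x : Σ e : E, Fin (m e) => s x.1) (fun x : Σ e : E, Fin (m e) => t x.1) q

/-- `C(G_m^{x,y}; q)`: the number of non-zero mod-`q` flows on the multigraph `G_m`
augmented by one extra edge joining `x` and `y`. -/
def flowCountMxy {V E : Type} [Fintype V] [DecidableEq V] [Fintype E]
    (s t : E → V) (m : E → ℕ) (x y : V) (q : ℕ) : ℕ :=
  flowCount V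
    (fun o : Option (Σ e : E, Fin (m e)) => o.elim x (fun z => s z.1))
    (fun o : Option (Σ e : E, Fin (m e)) => o.elim y (fun z => t z.1)) q

/-- The Poisson weight `∏_e e^{-λ_e} λ_e^{m_e} / m_e!` of a vector of edge multiplicities. -/
def poissonWt {E : Type} [Fintype E] (lam : E → ℝ) (m : E → ℕ) : ℝ :=
  ∏ e, Real.exp (-lam e) * lam e ^ (m e) / (Nat.factorial (m e))

/-- Expectation `E_λ(f(P))` with respect to independent Poisson multiplicities `P e`
of mean `lam e`. -/
def poissonExp {E : Type} [Fintype E] (lam : E → ℝ) (f : (E → ℕ) → ℝ) : ℝ :=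
  ∑' m : E → ℕ, poissonWt lam m * f m

/-- Probability `P_λ(P ∈ A)` with respect to independent Poisson multiplicities. -/
def poissonProb {E : Type} [Fintype E] (lam : E → ℝ) (A : (E → ℕ) → Prop) : ℝ :=
  ∑' m : E → ℕ, poissonWt lam m * (if A m then 1 else 0)

/-- Probability of an event for two independent families of independent Poisson
multiplicities. -/
def poissonProb2 {E : Type} [Fintype E] (lam : E → ℝ)
    (A : (E → ℕ) → (E → ℕ) → Prop) : ℝ :=
  ∑' m : E → ℕ, ∑' m' : E → ℕ,
    poissonWt lam m * poissonWt lam m' * (if A m m' then 1 else 0)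

/-- The (unnormalised) Potts weight `exp(∑_e β J_e (q δ_e(σ) - 1))` of a spin
configuration `σ`. -/
def pottsWt {V E : Type} [Fintype E] (s t : E → V) (q : ℕ) (β : ℝ) (J : E → ℝ)
    (σ : V → Fin q) : ℝ :=
  Real.exp (∑ e, β * J e * ((q : ℝ) * (if σ (s e) = σ (t e) then 1 else 0) - 1))

/-- The Potts partition function `Z_P`. -/
def pottsZ (V : Type) {E : Type} [Fintype V] [DecidableEq V] [Fintype E]
    (s t : E → V) (q : ℕ) (β : ℝ) (J : E → ℝ) : ℝ :=
  ∑ σ : V → Fin q, pottsWt s t q β J σ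

/-- The Potts two-point function `σ(x,y) = ∑_σ (q δ_{σ_x,σ_y} - 1) π(σ)`. -/
def pottsTwoPoint {V E : Type} [Fintype V] [DecidableEq V] [Fintype E]
    (s t : E → V) (q : ℕ) (β : ℝ) (J : E → ℝ) (x y : V) : ℝ :=
  (∑ σ : V → Fin q, ((q : ℝ) * (if σ x = σ y then 1 else 0) - 1) * pottsWt s t q β J σ)
    / pottsZ V s t q β J

/-- The degree of the vertex `v` in the multigraph `G_m`. -/
def mDeg {V E : Type} [Fintype E] [DecidableEq V] (s t : E → V) (m : E → ℕ) (v : V) : ℕ :=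
  ∑ e, m e * ((if s e = v then 1 else 0) + (if t e = v then 1 else 0))

/-- The multigraph `G_m` is even: every vertex has even degree. -/
def IsEvenM {V E : Type} [Fintype E] [DecidableEq V] (s t : E → V) (m : E → ℕ) : Prop :=
  ∀ v : V, Even (mDeg s t m v)

/-- The multigraph `G_m^{x,y}` (with one extra edge joining `x` and `y`) is even. -/
def IsEvenMxy {V E : Type} [Fintype E] [DecidableEq V] (s t : E → V) (m : E → ℕ)
    (x y : V) : Prop :=
  ∀ v : V, Even (mDeg s t m v + (if v = x then 1 else 0) + (if v = y then 1 else 0))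

/-- The source set `∂m` of a vector of multiplicities: the set of vertices of odd
degree in `G_m`. -/
def sources {V E : Type} [Fintype E] [DecidableEq V] (s t : E → V) (m : E → ℕ) : Set V :=
  {v : V | Odd (mDeg s t m v)}

/-- The simple graph on `V` induced by the edges `e` satisfying `pred e`. -/
def openGraph {V E : Type} (s t : E → V) (pred : E → Prop) : SimpleGraph V :=
  SimpleGraph.fromRel (fun a b => ∃ e, pred e ∧ s e = a ∧ t e = b)

/-- `x ↔ y in m`: `x` and `y` lie in the same component of `(V, {e : m e ≥ 1})`. -/
def ConnectedIn {V E : Type} (s t : E → V) (m : E → ℕ) (x y : V) : Prop :=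
  (openGraph s t fun e => m e ≠ 0).Reachable x y

/-- `x ↔ y` in the percolation configuration `ω`. -/
def ConnectedInB {V E : Type} (s t : E → V) (ω : E → Bool) (x y : V) : Prop :=
  (openGraph s t fun e => ω e = true).Reachable x y

/-- The number of connected components of the graph `(V, {e : pred e})`
(isolated vertices count). -/
def numComp {V E : Type} [Fintype V] (s t : E → V) (pred : E → Prop) : ℕ :=
  Nat.card (openGraph s t pred).ConnectedComponent

/-- Product (percolation) weight of a configuration, with edge densities `p`. -/
def percWt {E : Type} [Fintype E] (p : E → ℝ) (ω : E → Bool) : ℝ :=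
  ∏ e, if ω e then p e else 1 - p e

/-- Random-cluster weight of the configuration `ω`. -/
def rcWt {V E : Type} [Fintype V] [Fintype E] (s t : E → V) (p : E → ℝ) (q : ℝ)
    (ω : E → Bool) : ℝ :=
  percWt p ω * q ^ numComp s t (fun e => ω e = true)

/-- Random-cluster probability `φ_{p,q}(A)` of an event `A`. -/
def rcProb {V E : Type} [Fintype V] [Fintype E] (s t : E → V) (p : E → ℝ) (q : ℝ)
    (A : (E → Bool) → Prop) : ℝ :=
  (∑ ω : E → Bool, if A ω then rcWt s t p q ω else 0) / (∑ ω : E → Bool, rcWt s t p q ω)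

/-- The Whitney rank-generating function `W(u,v) = ∑_{F' ⊆ F} u^{r(F')} v^{c(F')}`
of the multigraph with vertex type `V` and edge-index type `ι`, where
`r(F') = |V| - k(F')` and `c(F') = |F'| - |V| + k(F')`. -/
def whitney (V : Type) [Fintype V] {ι : Type} [Fintype ι] (s t : ι → V) (u v : ℝ) : ℝ :=
  ∑ F : Finset ι,
    u ^ (Fintype.card V - numComp s t (· ∈ F)) *
      v ^ (F.card - (Fintype.card V - numComp s t (· ∈ F)))

/-- `F_q(G_m) = (-1)^{|edges| + |V| - 1} W_{G_m}(-1, -q)`, a real-`q` version of the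
flow polynomial of the multigraph `G_m`. -/
def flowPolyW {V E : Type} [Fintype V] [Fintype E] (s t : E → V) (q : ℝ) (m : E → ℕ) : ℝ :=
  (-1 : ℝ) ^ ((∑ e, m e) + Fintype.card V - 1) *
    whitney V (fun x : Σ e : E, Fin (m e) => s x.1) (fun x : Σ e : E, Fin (m e) => t x.1)
      (-1) (-q)

/-- `F_q(G_m^{x,y})`: as `flowPolyW`, for the multigraph `G_m` with one extra edge
joining `x` and `y`. -/
def flowPolyWxy {V E : Type} [Fintype V] [Fintype E] (s t : E → V) (q : ℝ) (m : E → ℕ)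
    (x y : V) : ℝ :=
  (-1 : ℝ) ^ (((∑ e, m e) + 1) + Fintype.card V - 1) *
    whitney V (fun o : Option (Σ e : E, Fin (m e)) => o.elim x (fun z => s z.1))
      (fun o : Option (Σ e : E, Fin (m e)) => o.elim y (fun z => t z.1)) (-1) (-q)

end FlowsAndFerromagnets
-- auxiliary development, to be pasted before the theorem
noncomputable section IsingAux

open Finset

private def epsSpin : Fin 2 → ℝ := fun a => if a = 0 then 1 else -1

private lemma epsSpin_mul_eq (a b : Fin 2) :
    epsSpin a * epsSpin b = 2 * (if a = b then 1 else 0) - 1 := by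
  fin_cases a <;> fin_cases b <;> norm_num [epsSpin]

private lemma sum_epsSpin_pow (n : ℕ) :
    ∑ a : Fin 2, epsSpin a ^ n = if Even n then 2 else 0 := by
  rw [Fin.sum_univ_two]
  have h0 : epsSpin 0 = 1 := rfl
  have h1 : epsSpin 1 = -1 := rfl
  rw [h0, h1, one_pow]
  rcases Nat.even_or_odd n with h | h
  · rw [h.neg_one_pow, if_pos h]; norm_num
  · rw [h.neg_one_pow, if_neg (Nat.not_even_iff_odd.mpr h)]; norm_num

/-- degree of `v` in the subgraph with edge set `S` -/
private def degS {V E : Type} [Fintype E] [DecidableEq V] (s t : E → V)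
    (S : Finset E) (v : V) : ℕ :=
  ∑ e ∈ S, ((if s e = v then 1 else 0) + (if t e = v then 1 else 0))

private lemma prod_chi {V E : Type} [Fintype V] [Fintype E] [DecidableEq V]
    (s t : E → V) (σ : V → Fin 2) (S : Finset E) :
    ∏ e ∈ S, (epsSpin (σ (s e)) * epsSpin (σ (t e)))
      = ∏ v, epsSpin (σ v) ^ degS s t S v := by
  unfold degS
  simp_rw [← Finset.prod_pow_eq_pow_sum]
  rw [Finset.prod_comm]
  refine Finset.prod_congr rfl fun e _ => ?_
  simp only [pow_add]
  rw [Finset.prod_mul_distrib]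
  congr 1 <;> simp [pow_ite, Finset.prod_ite_eq]

private lemma sum_sigma_prod {V : Type} [Fintype V] [DecidableEq V] (d : V → ℕ) :
    ∑ σ : V → Fin 2, ∏ v, epsSpin (σ v) ^ d v
      = if ∀ v, Even (d v) then (2:ℝ) ^ Fintype.card V else 0 := by
  rw [← Fintype.prod_sum fun v (a : Fin 2) => epsSpin a ^ d v]
  simp_rw [sum_epsSpin_pow]
  by_cases h : ∀ v, Even (d v)
  · simp [h, Finset.prod_const]
  · rw [if_neg h]
    obtain ⟨v, hv⟩ := not_forall.mp h
    exact Finset.prod_eq_zero (Finset.mem_univ v) (by simp [hv])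

private lemma exp_term (lam : ℝ) (a b : Fin 2) :
    Real.exp (1 * lam * (((2:ℕ):ℝ) * (if a = b then 1 else 0) - 1)) =
      Real.sinh lam * (epsSpin a * epsSpin b) + Real.cosh lam := by
  rw [epsSpin_mul_eq]
  by_cases h : a = b
  · rw [if_pos h]
    rw [show (1 * lam * (((2:ℕ):ℝ) * 1 - 1)) = lam by push_cast; ring]
    rw [show Real.sinh lam * (2 * 1 - 1) + Real.cosh lam
        = Real.cosh lam + Real.sinh lam by ring]
    exact (Real.cosh_add_sinh lam).symm
  · rw [if_neg h]
    rw [show (1 * lam * (((2:ℕ):ℝ) * 0 - 1)) = -lam by push_cast; ring]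
    rw [show Real.sinh lam * (2 * 0 - 1) + Real.cosh lam
        = Real.cosh lam - Real.sinh lam by ring]
    exact (Real.cosh_sub_sinh lam).symm

/-- the high-temperature expansion of a spin sum with extra vertex weights
`∏ v, eps (σ v) ^ c v`. -/
private lemma potts_expand {V E : Type} [Fintype V] [DecidableEq V] [Fintype E]
    (s t : E → V) (lam : ℝ) (c : V → ℕ) :
    ∑ σ : V → Fin 2, (∏ v, epsSpin (σ v) ^ c v) * pottsWt s t 2 1 (fun _ => lam) σ
    = ∑ S : Finset E, (Real.sinh lam ^ S.card * Real.cosh lam ^ Sᶜ.card) *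
        (if ∀ v, Even (degS s t S v + c v) then (2:ℝ) ^ Fintype.card V else 0) := by
  have hw : ∀ σ : V → Fin 2, pottsWt s t 2 1 (fun _ => lam) σ
      = ∑ S : Finset E, (Real.sinh lam ^ S.card * Real.cosh lam ^ Sᶜ.card) *
          ∏ v, epsSpin (σ v) ^ degS s t S v := by
    intro σ
    rw [pottsWt, Real.exp_sum]
    rw [Finset.prod_congr rfl fun e _ => exp_term lam (σ (s e)) (σ (t e))]
    rw [Fintype.prod_add]
    refine Finset.sum_congr rfl fun S _ => ?_
    rw [Finset.prod_mul_distrib, Finset.prod_const, Finset.prod_const,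
      prod_chi s t σ S]
    ring
  simp_rw [hw, Finset.mul_sum]
  rw [Finset.sum_comm]
  refine Finset.sum_congr rfl fun S _ => ?_
  have : ∀ σ : V → Fin 2,
      (∏ v, epsSpin (σ v) ^ c v) *
        ((Real.sinh lam ^ S.card * Real.cosh lam ^ Sᶜ.card) *
          ∏ v, epsSpin (σ v) ^ degS s t S v)
      = (Real.sinh lam ^ S.card * Real.cosh lam ^ Sᶜ.card) *
          ∏ v, epsSpin (σ v) ^ (degS s t S v + c v) := by
    intro σ
    simp_rw [pow_add, Finset.prod_mul_distrib]
    ring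
  rw [Finset.sum_congr rfl fun σ _ => this σ, ← Finset.mul_sum,
    sum_sigma_prod]

private lemma mDeg_ite_eq_degS {V E : Type} [Fintype E] [DecidableEq V]
    (s t : E → V) (S : Finset E) (v : V) :
    mDeg s t (fun e => if (e ∈ S : Bool) then 1 else 0) v = degS s t S v := by
  unfold mDeg degS
  have h : ∀ e : E, (if (e ∈ S : Bool) then 1 else 0) *
      ((if s e = v then 1 else 0) + if t e = v then 1 else 0)
      = if e ∈ S then ((if s e = v then 1 else 0) + if t e = v then 1 else 0) else 0 := by
    intro e; by_cases hS : e ∈ S <;> simp [hS]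
  simp only [h]
  rw [← Finset.sum_filter]
  congr 1
  ext e; simp

private lemma sources_empty_iff {V E : Type} [Fintype E] [DecidableEq V]
    (s t : E → V) (m : E → ℕ) :
    sources s t m = (∅ : Set V) ↔ ∀ v, Even (mDeg s t m v) := by
  rw [Set.eq_empty_iff_forall_notMem]
  refine forall_congr' fun v => ?_
  simp [sources, Nat.not_odd_iff_even]

private lemma sources_pair_iff {V E : Type} [Fintype E] [DecidableEq V]
    (s t : E → V) (m : E → ℕ) (x y : V) (hxy : x ≠ y) :
    sources s t m = ({x, y} : Set V) ↔
      ∀ v, Even (mDeg s t m v +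
        ((if v = x then 1 else 0) + (if v = y then 1 else 0))) := by
  rw [Set.ext_iff]
  refine forall_congr' fun v => ?_
  simp only [sources, Set.mem_setOf_eq, Set.mem_insert_iff, Set.mem_singleton_iff]
  by_cases hx : v = x
  · subst hx
    simp [hxy, Nat.even_add_one, Nat.not_even_iff_odd]
  · by_cases hy : v = y
    · subst hy
      simp [hx, Nat.even_add_one, Nat.not_even_iff_odd]
    · simp [hx, hy, Nat.not_odd_iff_even]

private def boolEquiv (E : Type) [Fintype E] : Finset E ≃ (E → Bool) where
  toFun S := fun e => (e ∈ S : Bool)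
  invFun ζ := Finset.univ.filter fun e => ζ e = true
  left_inv S := by ext e; simp
  right_inv ζ := by funext e; simp

private lemma percWt_boolEquiv {E : Type} [Fintype E] (p : ℝ) (S : Finset E) :
    percWt (fun _ => p) (fun e => (e ∈ S : Bool)) = p ^ S.card * (1 - p) ^ Sᶜ.card := by
  unfold percWt
  rw [show (fun e => if (e ∈ S : Bool) then p else 1 - p)
      = fun e => if e ∈ S then p else 1 - p by funext e; by_cases h : e ∈ S <;> simp [h]]
  have h1 : Finset.univ.filter (fun e => e ∈ S) = S := by ext e; simp
  have h2 : Finset.univ.filter (fun e => ¬ e ∈ S) = Sᶜ := by ext e; simp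
  rw [Finset.prod_ite, h1, h2, Finset.prod_const, Finset.prod_const]

private lemma prod_eps_pair {V : Type} [Fintype V] [DecidableEq V] (σ : V → Fin 2) (x y : V) :
    ∏ v, epsSpin (σ v) ^ ((if v = x then 1 else 0) + (if v = y then 1 else 0))
      = 2 * (if σ x = σ y then 1 else 0) - 1 := by
  simp only [pow_add]
  rw [Finset.prod_mul_distrib]
  rw [show (∏ v, epsSpin (σ v) ^ (if v = x then 1 else 0)) = epsSpin (σ x) by
    simp [pow_ite, Finset.prod_ite_eq']]
  rw [show (∏ v, epsSpin (σ v) ^ (if v = y then 1 else 0)) = epsSpin (σ y) by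
    simp [pow_ite, Finset.prod_ite_eq']]
  exact epsSpin_mul_eq _ _

private lemma boolEquiv_apply {E : Type} [Fintype E] (S : Finset E) (e : E) :
    boolEquiv E S e = (e ∈ S : Bool) := rfl

end IsingAux

/-- `σ(x,y) = φ_{p'}(∂ζ = {x,y}) / φ_{p'}(∂ζ = ∅)` for the Ising model with
`λ_e = λ` and `p' = (1 - e^{-2λ})/2`. -/
theorem ising_correlation_eq_sources_ratio
    (V E : Type) [Fintype V] [DecidableEq V] [Fintype E]
    (s t : E → V) (hloop : ∀ e, s e ≠ t e)
    (lam : ℝ) (hlam : 0 ≤ lam)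
    (p' : ℝ) (hp' : p' = (1 - Real.exp (-(2 * lam))) / 2)
    (x y : V) (hxy : x ≠ y) :
    pottsTwoPoint s t 2 1 (fun _ => lam) x y =
      (∑ ζ : E → Bool,
          if sources s t (fun e => if ζ e then 1 else 0) = ({x, y} : Set V)
          then percWt (fun _ => p') ζ else 0) /
      (∑ ζ : E → Bool,
          if sources s t (fun e => if ζ e then 1 else 0) = (∅ : Set V)
          then percWt (fun _ => p') ζ else 0) := by
  classical
  -- notation
  set W : Finset E → ℝ := fun S => Real.sinh lam ^ S.card * Real.cosh lam ^ Sᶜ.card with hWdef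
  set cxy : V → ℕ := fun v => (if v = x then 1 else 0) + (if v = y then 1 else 0) with hcxy
  set Pxy : Finset E → Prop := fun S => ∀ v, Even (degS s t S v + cxy v) with hPxy
  set P0 : Finset E → Prop := fun S => ∀ v, Even (degS s t S v) with hP0
  -- p' and 1 - p' in terms of sinh and cosh
  have h1 : Real.exp (-lam) * Real.exp lam = 1 := by
    rw [← Real.exp_add]; simp
  have h2 : Real.exp (-lam) * Real.exp (-lam) = Real.exp (-(2 * lam)) := by
    rw [← Real.exp_add]; ring_nf
  have hps : p' = Real.exp (-lam) * Real.sinh lam := by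
    rw [hp', Real.sinh_eq]
    linear_combination (-1 / 2 : ℝ) * h1 + (1 / 2 : ℝ) * h2
  have hqs : 1 - p' = Real.exp (-lam) * Real.cosh lam := by
    rw [hp', Real.cosh_eq]
    linear_combination (-1 / 2 : ℝ) * h1 - (1 / 2 : ℝ) * h2
  -- LHS numerator
  have hnum1 : ∀ σ : V → Fin 2,
      ((((2:ℕ)):ℝ) * (if σ x = σ y then 1 else 0) - 1) = ∏ v, epsSpin (σ v) ^ cxy v := by
    intro σ; rw [hcxy]; rw [prod_eps_pair σ x y]; norm_num
  have hLnum : (∑ σ : V → Fin 2,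
        ((((2:ℕ)):ℝ) * (if σ x = σ y then 1 else 0) - 1) * pottsWt s t 2 1 (fun _ => lam) σ)
      = (2:ℝ) ^ Fintype.card V * ∑ S : Finset E, (if Pxy S then W S else 0) := by
    rw [Finset.sum_congr rfl fun σ _ => by rw [hnum1 σ], potts_expand s t lam cxy,
      Finset.mul_sum]
    refine Finset.sum_congr rfl fun S _ => ?_
    by_cases h : Pxy S
    · simp only [if_pos h, if_pos (show ∀ v, Even (degS s t S v + cxy v) from h)]
      rw [hWdef]; ring
    · simp only [if_neg h, if_neg (show ¬ ∀ v, Even (degS s t S v + cxy v) from h)]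
      ring
  -- LHS denominator
  have hLden : pottsZ V s t 2 1 (fun _ => lam)
      = (2:ℝ) ^ Fintype.card V * ∑ S : Finset E, (if P0 S then W S else 0) := by
    have h := potts_expand s t lam (fun _ : V => 0)
    simp only [pow_zero, Finset.prod_const_one, one_mul, add_zero] at h
    rw [pottsZ, h, Finset.mul_sum]
    refine Finset.sum_congr rfl fun S _ => ?_
    by_cases h : P0 S
    · simp only [if_pos h, if_pos (show ∀ v, Even (degS s t S v) from h)]
      rw [hWdef]; ring
    · simp only [if_neg h, if_neg (show ¬ ∀ v, Even (degS s t S v) from h)]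
      ring
  -- RHS sums re-indexed over finsets
  have hperc : ∀ S : Finset E,
      percWt (fun _ => p') (boolEquiv E S)
        = Real.exp (-lam) ^ Fintype.card E * W S := by
    intro S
    rw [show (boolEquiv E S) = fun e => (e ∈ S : Bool) from rfl]
    rw [percWt_boolEquiv, hqs, hps, mul_pow, mul_pow, hWdef]
    rw [show Real.exp (-lam) ^ S.card * Real.sinh lam ^ S.card *
        (Real.exp (-lam) ^ Sᶜ.card * Real.cosh lam ^ Sᶜ.card)
      = (Real.exp (-lam) ^ S.card * Real.exp (-lam) ^ Sᶜ.card) *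
        (Real.sinh lam ^ S.card * Real.cosh lam ^ Sᶜ.card) by ring]
    rw [← pow_add, Finset.card_add_card_compl]
  have hsrc_xy : ∀ S : Finset E,
      (sources s t (fun e => if (boolEquiv E S) e then 1 else 0) = ({x, y} : Set V)) ↔ Pxy S := by
    intro S
    simp only [boolEquiv_apply]
    rw [sources_pair_iff s t _ x y hxy]
    exact forall_congr' fun v => Iff.of_eq (congrArg (fun n => Even (n + cxy v)) (mDeg_ite_eq_degS s t S v))
  have hsrc_0 : ∀ S : Finset E,
      (sources s t (fun e => if (boolEquiv E S) e then 1 else 0) = (∅ : Set V)) ↔ P0 S := by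
    intro S
    simp only [boolEquiv_apply]
    rw [sources_empty_iff]
    exact forall_congr' fun v => Iff.of_eq (congrArg Even (mDeg_ite_eq_degS s t S v))
  have hRnum : (∑ ζ : E → Bool,
        if sources s t (fun e => if ζ e then 1 else 0) = ({x, y} : Set V)
        then percWt (fun _ => p') ζ else 0)
      = Real.exp (-lam) ^ Fintype.card E * ∑ S : Finset E, (if Pxy S then W S else 0) := by
    rw [← Equiv.sum_comp (boolEquiv E) (fun ζ =>
      if sources s t (fun e => if ζ e then 1 else 0) = ({x, y} : Set V)
      then percWt (fun _ => p') ζ else 0), Finset.mul_sum]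
    refine Finset.sum_congr rfl fun S _ => ?_
    by_cases h : Pxy S
    · rw [if_pos ((hsrc_xy S).mpr h), if_pos h, hperc S]
    · rw [if_neg (fun hh => h ((hsrc_xy S).mp hh)), if_neg h, mul_zero]
  have hRden : (∑ ζ : E → Bool,
        if sources s t (fun e => if ζ e then 1 else 0) = (∅ : Set V)
        then percWt (fun _ => p') ζ else 0)
      = Real.exp (-lam) ^ Fintype.card E * ∑ S : Finset E, (if P0 S then W S else 0) := by
    rw [← Equiv.sum_comp (boolEquiv E) (fun ζ =>
      if sources s t (fun e => if ζ e then 1 else 0) = (∅ : Set V)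
      then percWt (fun _ => p') ζ else 0), Finset.mul_sum]
    refine Finset.sum_congr rfl fun S _ => ?_
    by_cases h : P0 S
    · rw [if_pos ((hsrc_0 S).mpr h), if_pos h, hperc S]
    · rw [if_neg (fun hh => h ((hsrc_0 S).mp hh)), if_neg h, mul_zero]
  -- assemble
  rw [pottsTwoPoint, hLnum, hLden, hRnum, hRden]
  rw [mul_div_mul_left _ _ (by positivity : (2:ℝ) ^ Fintype.card V ≠ 0),
      mul_div_mul_left _ _ (by positivity : Real.exp (-lam) ^ Fintype.card E ≠ 0)]
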